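/- arXiv:2301.00446 — 2 statements merged into one kernel-verified Lean document; each statement's English description precedes it below -/
import Mathlib

section
/- Let G be a quasisimple finite group (G is perfect and G/Z(G) is simple) satisfying |G/Z(G)| < (|G/Z(G)|_{p'})^2 for every prime p. Then G has no nonprincipal irreducible character whose codegree is a prime power. -/
open FiniteDimensional CategoryTheory

/-- The kernel of a finite-dimensional complex representation, as a subgroup. -/
def repKer {G : Type} [Group G] (V : FDRep ℂ G) : Subgroup G where
  carrier := {g | V.ρ g = 1}
  one_mem' := map_one V.ρ
  mul_mem' := fun ha hb => by
    simp only [Set.mem_setOf_eq] at *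
    rw [map_mul, ha, hb, one_mul]
  inv_mem' := fun {a} ha => by
    simp only [Set.mem_setOf_eq] at *
    calc V.ρ a⁻¹ = V.ρ a⁻¹ * V.ρ a := by rw [ha, mul_one]
    _ = V.ρ (a⁻¹ * a) := (map_mul _ _ _).symm
    _ = 1 := by simp

/-- The degree `χ(1)` of the character of `V`. -/
noncomputable def degree {G : Type} [Group G] (V : FDRep ℂ G) : ℕ :=
  Module.finrank ℂ V

/-- The codegree `|G : ker χ| / χ(1)` (a positive integer for irreducible `χ`). -/
noncomputable def codeg {G : Type} [Group G] (V : FDRep ℂ G) : ℕ :=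
  (repKer V).index / degree V

/-- The set of codegrees of irreducible characters of `G`. -/
def codSet (G : Type) [Group G] : Set ℕ :=
  {n | ∃ V : FDRep ℂ G, Simple V ∧ codeg V = n}

/-- The set of degrees of irreducible characters of `G`. -/
def cdSet (G : Type) [Group G] : Set ℕ :=
  {n | ∃ V : FDRep ℂ G, Simple V ∧ degree V = n}

namespace QSAux

open CategoryTheory Module Polynomial
open scoped commutatorElement

/-! ### Matrix eigenvalue lemmas -/

lemma eval_charpoly' {n : ℕ} (A : Matrix (Fin n) (Fin n) ℂ) (x : ℂ) :
    A.charpoly.eval x = (Matrix.scalar (Fin n) x - A).det := by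
  rw [Matrix.charpoly, ← Polynomial.coe_evalRingHom, RingHom.map_det]
  congr 1
  ext i j
  by_cases h : i = j <;>
    simp [Matrix.charmatrix_apply, Matrix.scalar_apply, Matrix.diagonal_apply, h]

lemma pow_mulVec_eigen {n : ℕ} {A : Matrix (Fin n) (Fin n) ℂ} {v : Fin n → ℂ} {μ : ℂ}
    (hv : A.mulVec v = μ • v) (k : ℕ) : (A ^ k).mulVec v = μ ^ k • v := by
  induction k with
  | zero => simp
  | succ k ih =>
      rw [pow_succ, ← Matrix.mulVec_mulVec, hv, Matrix.mulVec_smul, ih, smul_smul, pow_succ]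
      ring_nf

lemma root_pow_eq_one {n N : ℕ} {A : Matrix (Fin n) (Fin n) ℂ} (hN : N ≠ 0) (hA : A ^ N = 1)
    {μ : ℂ} (hμ : μ ∈ A.charpoly.roots) : μ ^ N = 1 := by
  have hroot : A.charpoly.eval μ = 0 :=
    (Polynomial.mem_roots (A.charpoly_monic.ne_zero)).1 hμ
  rw [eval_charpoly'] at hroot
  obtain ⟨v, hv0, hv⟩ := Matrix.exists_mulVec_eq_zero_iff.2 hroot
  have heig : A.mulVec v = μ • v := by
    rw [Matrix.sub_mulVec, sub_eq_zero] at hv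
    rw [← hv]
    funext i
    simp [Matrix.scalar, Matrix.mulVec_diagonal]
  have hNv := pow_mulVec_eigen heig N
  rw [hA] at hNv
  simp only [Matrix.one_mulVec] at hNv
  obtain ⟨i, hi⟩ := Function.ne_iff.1 hv0
  have hvi : μ ^ N * v i = v i := by
    conv_rhs => rw [hNv]; rfl
    simp
  have hz : (μ ^ N - 1) * v i = 0 := by ring_nf; linear_combination hvi
  rcases mul_eq_zero.1 hz with h | h
  · exact sub_eq_zero.1 h
  · exact absurd h (by simpa using hi)

lemma card_roots_charpoly {n : ℕ} (A : Matrix (Fin n) (Fin n) ℂ) :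
    Multiset.card A.charpoly.roots = n := by
  rw [Polynomial.splits_iff_card_roots.1 (IsAlgClosed.splits _),
    Matrix.charpoly_natDegree_eq_dim, Fintype.card_fin]

lemma nonneg_pow_eq_one {N : ℕ} {x : ℝ} (hx : 0 ≤ x) (hN : N ≠ 0) (h : x ^ N = 1) : x = 1 := by
  rcases lt_trichotomy x 1 with h1 | h1 | h1
  · have := pow_lt_one₀ hx h1 hN
    rw [h] at this; exact absurd this (lt_irrefl 1)
  · exact h1
  · have := one_lt_pow₀ h1 hN
    rw [h] at this; exact absurd this (lt_irrefl 1)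

lemma inv_eq_conj_of_pow {N : ℕ} {μ : ℂ} (hN : N ≠ 0) (h : μ ^ N = 1) :
    μ⁻¹ = (starRingEnd ℂ) μ := by
  have h0 : μ ≠ 0 := by
    intro h0; rw [h0, zero_pow hN] at h; exact zero_ne_one h
  have hns : Complex.normSq μ = 1 := by
    have : Complex.normSq μ ^ N = 1 := by
      rw [← map_pow, h, _root_.map_one]
    exact nonneg_pow_eq_one (Complex.normSq_nonneg μ) hN this
  field_simp [eq_comm]
  rw [Complex.mul_conj, hns, Complex.ofReal_one]

lemma scalar_eq_smul {n : ℕ} (y : ℂ) :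
    Matrix.scalar (Fin n) y = y • (1 : Matrix (Fin n) (Fin n) ℂ) := by
  ext i j
  by_cases h : i = j <;> simp [Matrix.one_apply, Matrix.diagonal_apply, h]

lemma roots_charpoly_inv {n N : ℕ} {A B : Matrix (Fin n) (Fin n) ℂ} (hN : N ≠ 0)
    (hA : A ^ N = 1) (hAB : A * B = 1) :
    B.charpoly.roots = A.charpoly.roots.map (·⁻¹) := by
  have hroots0 : ∀ μ ∈ A.charpoly.roots, μ ≠ 0 := by
    intro μ hμ h0
    have := root_pow_eq_one hN hA hμ
    rw [h0, zero_pow hN] at this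
    exact zero_ne_one this
  have hdetA : A.det = A.charpoly.roots.prod := Matrix.det_eq_prod_roots_charpoly A
  have hdetA0 : A.det ≠ 0 := by
    rw [hdetA]; exact Multiset.prod_ne_zero fun h => (hroots0 0 h rfl)
  have hAfact : A.charpoly = (A.charpoly.roots.map fun μ => X - C μ).prod :=
    (IsAlgClosed.splits _).eq_prod_roots_of_monic A.charpoly_monic
  have key : B.charpoly = (A.charpoly.roots.map (fun μ => X - C μ⁻¹)).prod := by
    apply Polynomial.eq_of_infinite_eval_eq
    apply Set.Infinite.mono (s := {(0 : ℂ)}ᶜ)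
    swap
    · exact Set.Finite.infinite_compl (Set.finite_singleton 0)
    intro x hx
    have hx0 : x ≠ 0 := hx
    simp only [Set.mem_setOf_eq]
    have h1 : A * (Matrix.scalar (Fin n) x - B) = (-x) • (Matrix.scalar (Fin n) x⁻¹ - A) := by
      rw [Matrix.mul_sub, hAB, scalar_eq_smul, scalar_eq_smul, mul_smul_comm, mul_one,
        smul_sub, smul_smul, neg_mul, mul_inv_cancel₀ hx0, neg_smul, neg_smul, one_smul,
        sub_neg_eq_add]
      abel
    have h2 : A.det * (Matrix.scalar (Fin n) x - B).det
        = (-x) ^ n * (Matrix.scalar (Fin n) x⁻¹ - A).det := by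
      rw [← Matrix.det_mul, h1, Matrix.det_smul, Fintype.card_fin]
    have h3 : (Matrix.scalar (Fin n) x⁻¹ - A).det
        = (A.charpoly.roots.map fun μ => x⁻¹ - μ).prod := by
      rw [← eval_charpoly']
      conv_lhs => rw [hAfact]
      rw [Polynomial.eval_multiset_prod, Multiset.map_map]
      congr 1
      apply Multiset.map_congr rfl
      intro μ _
      simp
    rw [eval_charpoly']
    have hBdet : (Matrix.scalar (Fin n) x - B).det
        = A.det⁻¹ * ((-x) ^ n * (A.charpoly.roots.map fun μ => x⁻¹ - μ).prod) := by
      rw [← h3, ← h2, ← mul_assoc, inv_mul_cancel₀ hdetA0, one_mul]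
    rw [hBdet, Polynomial.eval_multiset_prod, Multiset.map_map]
    rw [hdetA]
    rw [show A.charpoly.roots.prod⁻¹ = (A.charpoly.roots.map (·⁻¹)).prod by
      rw [Multiset.prod_map_inv]; simp]
    have hxpow : (-x) ^ n = (A.charpoly.roots.map (fun _ => -x)).prod := by
      rw [Multiset.map_const', Multiset.prod_replicate, card_roots_charpoly]
    rw [hxpow, ← Multiset.prod_map_mul, ← Multiset.prod_map_mul]
    congr 1
    apply Multiset.map_congr rfl
    intro μ hμ
    have hμ0 : μ ≠ 0 := hroots0 μ hμ
    simp only [Function.comp_apply, eval_sub, eval_X, eval_C]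
    field_simp
    ring
  have := congrArg Polynomial.roots key
  rwa [show (A.charpoly.roots.map fun μ => X - C μ⁻¹)
      = ((A.charpoly.roots.map (·⁻¹)).map fun a => X - C a) by
        rw [Multiset.map_map]; rfl,
    Polynomial.roots_multiset_prod_X_sub_C] at this

lemma trace_inv_conj {n N : ℕ} {A B : Matrix (Fin n) (Fin n) ℂ} (hN : N ≠ 0) (hA : A ^ N = 1)
    (hAB : A * B = 1) : B.trace = (starRingEnd ℂ) A.trace := by
  rw [Matrix.trace_eq_sum_roots_charpoly, Matrix.trace_eq_sum_roots_charpoly,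
    roots_charpoly_inv hN hA hAB]
  have hms := map_multiset_sum (starRingEnd ℂ) A.charpoly.roots
  rw [hms]
  congr 1
  apply Multiset.map_congr rfl
  intro μ hμ
  exact inv_eq_conj_of_pow hN (root_pow_eq_one hN hA hμ)

/-! ### FDRep plumbing -/

variable {G : Type} [Group G]

/-- Build an endomorphism in `FDRep ℂ G` from a commuting linear map. -/
def mkEnd (V : FDRep ℂ G) (f : V →ₗ[ℂ] V) (hf : ∀ g : G, f ∘ₗ V.ρ g = V.ρ g ∘ₗ f) : V ⟶ V :=
  ⟨FGModuleCat.ofHom f, by intro g; ext v; exact LinearMap.congr_fun (hf g) v⟩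

lemma schur_scalar (V : FDRep ℂ G) [Simple V] (f : V →ₗ[ℂ] V)
    (hf : ∀ g : G, f ∘ₗ V.ρ g = V.ρ g ∘ₗ f) : ∃ c : ℂ, f = c • LinearMap.id := by
  obtain ⟨c, hc⟩ := endomorphism_simple_eq_smul_id ℂ (mkEnd V f hf)
  refine ⟨c, ?_⟩
  have := congrArg (fun φ => φ.hom.hom.hom) hc
  exact this.symm

lemma orth (V : FDRep ℂ G) [Fintype G] [Simple V] :
    ∑ g : G, V.character g * V.character g⁻¹ = (Fintype.card G : ℂ) := by
  have h := FDRep.char_orthonormal V V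
  rw [if_pos ⟨Iso.refl _⟩] at h
  have h2 := congrArg (fun z => (Nat.card G : ℂ) * z) h
  have hc0 : (Nat.card G : ℂ) ≠ 0 := Nat.cast_ne_zero.mpr Nat.card_pos.ne'
  simp only [← mul_assoc, mul_inv_cancel₀ hc0, one_mul, Nat.cast_one, mul_one] at h2
  rw [h2, Nat.card_eq_fintype_card]

/-! ### Character values -/

/-- The ring of the algebraic integers we need. -/
noncomputable def R0 (N : ℕ) : Subalgebra ℤ ℂ := Algebra.adjoin ℤ {z : ℂ | z ^ N = 1}

lemma R0_fg {N : ℕ} (hN : N ≠ 0) : (Subalgebra.toSubmodule (R0 N)).FG := by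
  apply fg_adjoin_of_finite
  · have : {z : ℂ | z ^ N = 1} ⊆ {z : ℂ | (X ^ N - C 1 : ℂ[X]).IsRoot z} := by
      intro z hz
      simp only [Set.mem_setOf_eq, IsRoot, eval_sub, eval_pow, eval_X, eval_C] at *
      rw [hz, sub_self]
    exact Set.Finite.subset (Polynomial.finite_setOf_isRoot (by
      intro h
      have := congrArg Polynomial.natDegree h
      rw [Polynomial.natDegree_X_pow_sub_C, Polynomial.natDegree_zero] at this
      exact hN this)) this
  · intro z hz
    exact ⟨X ^ N - C 1, Polynomial.monic_X_pow_sub_C 1 hN, by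
      simp only [Set.mem_setOf_eq] at hz
      simp [hz]⟩

variable [Fintype G]

noncomputable def bV (V : FDRep ℂ G) : Basis (Fin (finrank ℂ V)) ℂ V := Module.finBasis ℂ V

noncomputable def MM (V : FDRep ℂ G) (g : G) :
    Matrix (Fin (finrank ℂ V)) (Fin (finrank ℂ V)) ℂ :=
  LinearMap.toMatrixAlgEquiv (bV V) (V.ρ g)

lemma MM_mul (V : FDRep ℂ G) (g h : G) : MM V g * MM V h = MM V (g * h) := by
  rw [MM, MM, MM, map_mul, ← _root_.map_mul]

lemma MM_pow_card (V : FDRep ℂ G) (g : G) : MM V g ^ Fintype.card G = 1 := by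
  have : (V.ρ g) ^ Fintype.card G = V.ρ (g ^ Fintype.card G) := by
    rw [map_pow]
  rw [MM, ← map_pow, this, pow_card_eq_one, _root_.map_one, _root_.map_one]

lemma MM_trace (V : FDRep ℂ G) (g : G) : (MM V g).trace = V.character g := by
  rw [FDRep.character, LinearMap.trace_eq_matrix_trace ℂ (bV V), MM]
  rfl

lemma char_inv_conj (V : FDRep ℂ G) (g : G) :
    V.character g⁻¹ = (starRingEnd ℂ) (V.character g) := by
  rw [← MM_trace, ← MM_trace]
  exact trace_inv_conj (N := Fintype.card G) Fintype.card_ne_zero (MM_pow_card V g)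
    (by rw [MM_mul, mul_inv_cancel, MM, _root_.map_one, _root_.map_one])

lemma char_mem_R0 (V : FDRep ℂ G) (g : G) : V.character g ∈ R0 (Fintype.card G) := by
  rw [← MM_trace, Matrix.trace_eq_sum_roots_charpoly]
  apply multiset_sum_mem
  intro μ hμ
  apply Algebra.subset_adjoin
  exact root_pow_eq_one Fintype.card_ne_zero (MM_pow_card V g) hμ

/-! ### Integrality -/

lemma integral_scalar (V : FDRep ℂ G) {N : ℕ} (hN : N ≠ 0) (c : ℂ) {ι : Type} [Fintype ι]
    (a : ι → ℂ) (u : ι → G) (ha : ∀ i, a i ∈ R0 N)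
    (hT : (∑ i, a i • (V.ρ (u i) : Module.End ℂ ↥V)) = algebraMap ℂ (Module.End ℂ ↥V) c)
    (hn : finrank ℂ ↥V ≠ 0) : IsIntegral ℤ c := by
  classical
  set B := Module.End ℂ ↥V with hB
  letI algRB : Algebra ↥(R0 N) B := RingHom.toAlgebra'
    ((algebraMap ℂ B).comp (algebraMap ↥(R0 N) ℂ))
    (fun c x => by
      simp only [RingHom.coe_comp, Function.comp_apply]
      exact Algebra.commutes _ x)
  haveI tower : IsScalarTower ℤ ↥(R0 N) B :=
    IsScalarTower.of_algebraMap_eq' (by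
      apply RingHom.ext_int)
  haveI hRint : Algebra.IsIntegral ℤ ↥(R0 N) := by
    constructor
    intro x
    rw [← isIntegral_algHom_iff (R0 N).val Subtype.val_injective]
    exact IsIntegral.of_mem_of_fg _ (R0_fg hN) _ x.2
  set A : Subalgebra ↥(R0 N) B := Algebra.adjoin ↥(R0 N) (Set.range fun g : G => (V.ρ g : B))
    with hA
  have hAfg : (Subalgebra.toSubmodule A).FG := by
    rw [hA, Algebra.adjoin_eq_span]
    have h0 : Set.range (fun g : G => (V.ρ g : B))
        = ((MonoidHom.mrange V.ρ : Submonoid B) : Set B) :=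
      (MonoidHom.coe_mrange V.ρ).symm
    have h1 : (Submonoid.closure (Set.range fun g : G => (V.ρ g : B)) : Set B)
        = Set.range fun g : G => (V.ρ g : B) := by
      rw [h0, Submonoid.closure_eq]
    rw [h1]
    exact Submodule.fg_span (Set.finite_range _)
  have hTmem : (∑ i, a i • (V.ρ (u i) : B)) ∈ A := by
    apply Subalgebra.sum_mem
    intro i _
    have h1 : a i • (V.ρ (u i) : B) = algebraMap ↥(R0 N) B ⟨a i, ha i⟩ * (V.ρ (u i) : B) := by
      rw [show algebraMap ↥(R0 N) B ⟨a i, ha i⟩ = algebraMap ℂ B (a i) from rfl,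
        ← Algebra.smul_def]
    rw [h1]
    exact A.mul_mem (A.algebraMap_mem _) (Algebra.subset_adjoin ⟨u i, rfl⟩)
  have hTintR : IsIntegral ↥(R0 N) (∑ i, a i • (V.ρ (u i) : B)) :=
    IsIntegral.of_mem_of_fg A hAfg _ hTmem
  have hTint : IsIntegral ℤ (∑ i, a i • (V.ρ (u i) : B)) := @isIntegral_trans ℤ (R0 N) B _ _ _ _ _ _ tower _ _ hTintR
  rw [hT] at hTint
  have hinj : Function.Injective (algebraMap ℂ B) := by
    intro x y hxy
    have := congrArg (LinearMap.trace ℂ ↥V) hxy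
    rw [Algebra.algebraMap_eq_smul_one, Algebra.algebraMap_eq_smul_one, map_smul, map_smul,
      LinearMap.trace_one] at this
    have hn' : (finrank ℂ ↥V : ℂ) ≠ 0 := Nat.cast_ne_zero.2 hn
    rw [smul_eq_mul, smul_eq_mul] at this
    exact mul_right_cancel₀ hn' this
  rw [← isIntegral_algHom_iff ((Algebra.ofId ℂ B).restrictScalars ℤ) hinj]
  exact hTint

lemma rat_of_integral {a b : ℕ} (hb : b ≠ 0) (h : IsIntegral ℤ ((a : ℂ) / (b : ℂ))) :
    b ∣ a := by
  have h' : IsIntegral ℤ ((IsScalarTower.toAlgHom ℤ ℚ ℂ) ((a : ℚ) / (b : ℚ))) := by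
    have heq : ((IsScalarTower.toAlgHom ℤ ℚ ℂ) ((a : ℚ) / (b : ℚ))) = (a : ℂ) / (b : ℂ) := by
      rw [IsScalarTower.coe_toAlgHom', eq_ratCast (algebraMap ℚ ℂ)]
      push_cast; ring
    rw [heq]; exact h
  have h2 : IsIntegral ℤ ((a : ℚ) / (b : ℚ)) :=
    (isIntegral_algHom_iff _ (algebraMap ℚ ℂ).injective).1 h'
  obtain ⟨z, hz⟩ := IsIntegrallyClosed.isIntegral_iff.1 h2
  have hzq : ((z : ℚ)) = (a : ℚ) / (b : ℚ) := by exact_mod_cast hz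
  have hb' : (b : ℚ) ≠ 0 := Nat.cast_ne_zero.2 hb
  have : (z : ℚ) * (b : ℚ) = (a : ℚ) := by
    rw [hzq, div_mul_cancel₀ _ hb']
  have hint : z * (b : ℤ) = (a : ℤ) := by exact_mod_cast this
  have : (b : ℤ) ∣ (a : ℤ) := Dvd.intro_left z hint
  exact_mod_cast this

/-! ### Degree divides the index of the kernel -/

/-- Explicit coset-decomposition equivalence. -/
noncomputable def cosetEquiv (K : Subgroup G) : (G ⧸ K) × ↥K ≃ G where
  toFun p := Quotient.out p.1 * (p.2 : G)
  invFun g := (QuotientGroup.mk g,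
    ⟨(Quotient.out (QuotientGroup.mk (s := K) g))⁻¹ * g, by
      have h : (QuotientGroup.mk (s := K) (Quotient.out (QuotientGroup.mk (s := K) g)))
          = QuotientGroup.mk (s := K) g := Quotient.out_eq _
      exact (QuotientGroup.eq (s := K)).1 h⟩)
  left_inv := by
    rintro ⟨q, k⟩
    have hq : QuotientGroup.mk (s := K) (Quotient.out q * (k : G)) = q := by
      rw [QuotientGroup.mk_mul_of_mem _ k.2]
      exact Quotient.out_eq q
    ext
    · simp [hq]
    · simp [hq]
  right_inv := by
    intro g
    simp [mul_inv_cancel_left]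

lemma char_dvd_index (V : FDRep ℂ G) [Simple V] (hn : finrank ℂ ↥V ≠ 0) :
    finrank ℂ ↥V ∣ (repKer V).index := by
  classical
  set n := finrank ℂ ↥V with hndef
  set χ := V.character with hχdef
  set T : Module.End ℂ ↥V := ∑ g : G, χ g⁻¹ • (V.ρ g : Module.End ℂ ↥V) with hT
  have hcomm : ∀ h : G, T * (V.ρ h : Module.End ℂ ↥V) = V.ρ h * T := by
    intro h
    rw [hT, Finset.sum_mul, Finset.mul_sum]
    simp only [smul_mul_assoc, mul_smul_comm]
    have key : ∀ u : G,
        χ ((h * u * h⁻¹)⁻¹) • ((V.ρ (h * u * h⁻¹) : Module.End ℂ ↥V) * V.ρ h)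
          = χ u⁻¹ • ((V.ρ h : Module.End ℂ ↥V) * V.ρ u) := by
      intro u
      have h1 : χ ((h * u * h⁻¹)⁻¹) = χ u⁻¹ := by
        have : (h * u * h⁻¹)⁻¹ = h * u⁻¹ * h⁻¹ := by group
        rw [this, hχdef, FDRep.char_conj]
      have h2 : (V.ρ (h * u * h⁻¹) : Module.End ℂ ↥V) * V.ρ h
          = (V.ρ h : Module.End ℂ ↥V) * V.ρ u := by
        rw [← _root_.map_mul, ← _root_.map_mul]
        congr 1
        group
      rw [h1, h2]
    calc ∑ g : G, χ g⁻¹ • ((V.ρ g : Module.End ℂ ↥V) * V.ρ h)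
        = ∑ u : G, χ ((h * u * h⁻¹)⁻¹) • ((V.ρ (h * u * h⁻¹) : Module.End ℂ ↥V) * V.ρ h) := by
          apply (Fintype.sum_equiv (MulAut.conj h).toEquiv _ _ ?_).symm
          intro u; rfl
      _ = ∑ u : G, χ u⁻¹ • ((V.ρ h : Module.End ℂ ↥V) * V.ρ u) := by
          simp only [key]
  obtain ⟨cT, hcT⟩ := schur_scalar V T (fun g => by
    rw [← Module.End.mul_eq_comp, ← Module.End.mul_eq_comp]; exact hcomm g)
  have htrT : LinearMap.trace ℂ ↥V T = (Fintype.card G : ℂ) := by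
    rw [hT, map_sum]
    simp only [map_smul, smul_eq_mul]
    have : ∀ g : G, χ g⁻¹ * LinearMap.trace ℂ ↥V (V.ρ g) = χ g * χ g⁻¹ := by
      intro g; rw [hχdef]; unfold FDRep.character; ring
    rw [Finset.sum_congr rfl fun g _ => this g]
    exact orth V
  have htrT' : LinearMap.trace ℂ ↥V T = cT * n := by
    rw [hcT, map_smul, smul_eq_mul]
    congr 1
    exact LinearMap.trace_id ℂ ↥V
  have hcTval : cT = (Fintype.card G : ℂ) / n := by
    field_simp [Nat.cast_ne_zero.2 hn]
    rw [← htrT, htrT', mul_comm]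
  set K := repKer V with hK
  haveI : Fintype (G ⧸ K) := Fintype.ofFinite _
  haveI : Fintype ↥K := Fintype.ofFinite _
  set T' : Module.End ℂ ↥V :=
    ∑ q : G ⧸ K, χ ((Quotient.out q)⁻¹) • (V.ρ (Quotient.out q) : Module.End ℂ ↥V) with hT'
  have hgroup : T = (Fintype.card ↥K) • T' := by
    rw [hT]
    rw [← Fintype.sum_equiv (cosetEquiv K)
      (fun p => χ ((cosetEquiv K p)⁻¹) • (V.ρ (cosetEquiv K p) : Module.End ℂ ↥V))
      (fun g => χ g⁻¹ • (V.ρ g : Module.End ℂ ↥V)) (fun p => rfl)]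
    rw [Fintype.sum_prod_type]
    rw [hT', Finset.smul_sum]
    apply Finset.sum_congr rfl
    intro q _
    have hconst : ∀ k : ↥K,
        χ ((cosetEquiv K (q, k))⁻¹) • (V.ρ (cosetEquiv K (q, k)) : Module.End ℂ ↥V)
          = χ ((Quotient.out q)⁻¹) • (V.ρ (Quotient.out q) : Module.End ℂ ↥V) := by
      intro k
      have hk : V.ρ (k : G) = 1 := k.2
      have hki : V.ρ ((k : G)⁻¹) = 1 := (K.inv_mem k.2 : V.ρ ((k : G)⁻¹) = 1)
      have h1 : V.ρ (cosetEquiv K (q, k)) = V.ρ (Quotient.out q) := by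
        show V.ρ (Quotient.out q * (k : G)) = _
        rw [_root_.map_mul, hk, mul_one]
      have h2 : χ ((cosetEquiv K (q, k))⁻¹) = χ ((Quotient.out q)⁻¹) := by
        show χ ((Quotient.out q * (k : G))⁻¹) = _
        rw [mul_inv_rev, hχdef]
        unfold FDRep.character
        rw [_root_.map_mul, hki, one_mul]
      rw [h1, h2]
    rw [Finset.sum_congr rfl fun k _ => hconst k, Finset.sum_const, Finset.card_univ]
  have hKcard0 : (Fintype.card ↥K : ℂ) ≠ 0 := Nat.cast_ne_zero.2 Fintype.card_ne_zero
  have hT'sc : T' = ((K.index : ℂ) / n) • LinearMap.id := by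
    have h1 : (Fintype.card ↥K : ℂ) • T'
        = (Fintype.card ↥K : ℂ) • (((K.index : ℂ) / n) • LinearMap.id) := by
      rw [Nat.cast_smul_eq_nsmul, ← hgroup, hcT, smul_smul, hcTval]
      congr 1
      have hcardrel : (K.index : ℕ) * Fintype.card ↥K = Fintype.card G := by
        rw [← Nat.card_eq_fintype_card, ← Nat.card_eq_fintype_card, mul_comm]
        exact Subgroup.card_mul_index K
      rw [← hcardrel]
      push_cast
      field_simp
    exact smul_right_injective _ hKcard0 h1
  have hint : IsIntegral ℤ ((K.index : ℂ) / n) := by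
    apply integral_scalar V (Fintype.card_ne_zero (α := G)) _
      (fun q : G ⧸ K => χ ((Quotient.out q)⁻¹)) (fun q => Quotient.out q)
      (fun q => char_mem_R0 V _) ?_ hn
    rw [← hT', hT'sc, Algebra.algebraMap_eq_smul_one]
    rfl
  exact rat_of_integral hn hint

/-! ### Remaining lemmas -/

lemma finrank_ne_zero (V : FDRep ℂ G) [Simple V] : finrank ℂ ↥V ≠ 0 := by
  intro h
  haveI : Subsingleton ↥V := finrank_zero_iff.1 h
  have h0 : ∀ g : G, V.character g = 0 := by
    intro g
    have : V.ρ g = 0 := Subsingleton.elim _ _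
    rw [FDRep.character, this, map_zero]
  have := orth V
  rw [Finset.sum_congr rfl (fun g _ => by rw [h0 g, zero_mul])] at this
  rw [Finset.sum_const_zero] at this
  exact Fintype.card_ne_zero (by exact_mod_cast this.symm)

lemma center_scalar (V : FDRep ℂ G) [Simple V] (z : G) (hz : z ∈ Subgroup.center G) :
    ∃ c : ℂ, V.ρ z = c • LinearMap.id ∧ c ^ Fintype.card G = 1 := by
  obtain ⟨c, hc⟩ := schur_scalar V (V.ρ z) (fun g => by
    rw [← Module.End.mul_eq_comp, ← Module.End.mul_eq_comp, ← _root_.map_mul, ← _root_.map_mul,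
      (Subgroup.mem_center_iff.1 hz g).symm])
  refine ⟨c, hc, ?_⟩
  have hpow : (V.ρ z) ^ Fintype.card G = 1 := by
    rw [← map_pow, pow_card_eq_one, _root_.map_one]
  rw [hc, _root_.smul_pow] at hpow
  have := congrArg (LinearMap.trace ℂ ↥V) hpow
  rw [map_smul, Module.End.one_eq_id] at this
  have hid : LinearMap.id ^ Fintype.card G = (LinearMap.id : ↥V →ₗ[ℂ] ↥V) := by
    rw [← Module.End.one_eq_id, one_pow]
  rw [hid] at this
  have htr : LinearMap.trace ℂ ↥V LinearMap.id = (finrank ℂ ↥V : ℂ) := LinearMap.trace_id ℂ ↥V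
  rw [htr, smul_eq_mul] at this
  have hn := finrank_ne_zero V
  exact mul_right_cancel₀ ((Nat.cast_ne_zero (R := ℂ)).2 hn)
    (by rw [this, one_mul])

lemma sq_card_center_le (V : FDRep ℂ G) [Simple V] :
    (finrank ℂ ↥V) ^ 2 * Nat.card (Subgroup.center G) ≤ Nat.card G := by
  classical
  set n := finrank ℂ ↥V with hn
  set χ := V.character with hχ
  have hsum : ∑ g : G, (Complex.normSq (χ g) : ℂ) = (Fintype.card G : ℂ) := by
    rw [← orth V]
    apply Finset.sum_congr rfl
    intro g _
    rw [hχ, char_inv_conj V g, Complex.mul_conj]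
  have hsumR : ∑ g : G, Complex.normSq (χ g) = (Fintype.card G : ℝ) := by
    have h2 : ((∑ g : G, Complex.normSq (χ g) : ℝ) : ℂ) = ((Fintype.card G : ℝ) : ℂ) := by
      push_cast
      exact_mod_cast hsum
    exact_mod_cast h2
  set Zfin : Finset G := Finset.univ.filter (· ∈ Subgroup.center G) with hZfin
  have hterm : ∀ z ∈ Zfin, Complex.normSq (χ z) = (n : ℝ) ^ 2 := by
    intro z hzf
    have hz : z ∈ Subgroup.center G := by
      rw [hZfin] at hzf; simpa using hzf
    obtain ⟨c, hc, hcN⟩ := center_scalar V z hz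
    have hχz : χ z = c * n := by
      rw [hχ, FDRep.character, hc, map_smul, smul_eq_mul, LinearMap.trace_id]
    have hnc : Complex.normSq c = 1 := by
      apply nonneg_pow_eq_one (Complex.normSq_nonneg c) (Fintype.card_ne_zero (α := G))
      rw [← map_pow, hcN, _root_.map_one]
    rw [hχz, map_mul, hnc, one_mul]
    simp [Complex.normSq_natCast]
    ring
  have hle : ∑ z ∈ Zfin, Complex.normSq (χ z) ≤ ∑ g : G, Complex.normSq (χ g) :=
    Finset.sum_le_sum_of_subset_of_nonneg (Finset.subset_univ _)
      (fun g _ _ => Complex.normSq_nonneg _)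
  rw [Finset.sum_congr rfl hterm, Finset.sum_const, hsumR] at hle
  have hcardZ : Zfin.card = Nat.card (Subgroup.center G) := by
    rw [Nat.card_eq_fintype_card, Fintype.card_subtype]
  rw [hcardZ] at hle
  have : ((Nat.card (Subgroup.center G) * n ^ 2 : ℕ) : ℝ) ≤ ((Nat.card G : ℕ) : ℝ) := by
    push_cast
    rw [Nat.card_eq_fintype_card]
    simpa [nsmul_eq_mul] using hle
  have h3 := Nat.cast_le.1 this
  exact le_trans (le_of_eq (mul_comm _ _)) h3

lemma trivial_char (V : FDRep ℂ G) [Simple V] (htriv : ∀ g : G, V.ρ g = 1) :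
    V.character = 1 := by
  have hn : ∀ g : G, V.character g = (finrank ℂ ↥V : ℂ) := by
    intro g
    rw [FDRep.character, htriv g, Module.End.one_eq_id, LinearMap.trace_id]
  have h1 : ∑ g : G, V.character g * V.character g⁻¹
      = (Fintype.card G : ℂ) * ((finrank ℂ ↥V : ℂ) * (finrank ℂ ↥V : ℂ)) := by
    rw [Finset.sum_congr rfl (fun g _ => by rw [hn g, hn g⁻¹])]
    rw [Finset.sum_const, Finset.card_univ, nsmul_eq_mul]
  have hcard0 : (Fintype.card G : ℂ) ≠ 0 := Nat.cast_ne_zero.2 Fintype.card_ne_zero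
  have h2 : (finrank ℂ ↥V : ℂ) * (finrank ℂ ↥V : ℂ) = 1 :=
    mul_left_cancel₀ hcard0 ((h1.symm.trans (orth V)).trans (mul_one _).symm)
  have h3 : finrank ℂ ↥V * finrank ℂ ↥V = 1 := by exact_mod_cast h2
  have h4 : finrank ℂ ↥V = 1 := Nat.dvd_one.1 ⟨finrank ℂ ↥V, h3.symm⟩
  funext g
  rw [hn g, h4]
  simp

lemma kernel_cases (hperf : commutator G = ⊤)
    (hsimple : IsSimpleGroup (G ⧸ Subgroup.center G)) (V : FDRep ℂ G)
    (K : Subgroup G) (hKdef : ∀ g, g ∈ K ↔ V.ρ g = 1) :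
    K ≤ Subgroup.center G ∨ ∀ g : G, V.ρ g = 1 := by
  haveI hKnormal : K.Normal := by
    constructor
    intro k hk g
    rw [hKdef] at *
    rw [_root_.map_mul, _root_.map_mul, hk, mul_one, ← _root_.map_mul, mul_inv_cancel,
      _root_.map_one]
  set M := K.map (QuotientGroup.mk' (Subgroup.center G)) with hM
  haveI : M.Normal := Subgroup.Normal.map hKnormal _ (QuotientGroup.mk'_surjective _)
  rcases hsimple.eq_bot_or_eq_top_of_normal M (by infer_instance) with hbot | htop
  · left
    rw [hM, Subgroup.map_eq_bot_iff, QuotientGroup.ker_mk'] at hbot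
    exact hbot
  · right
    have hdecomp : ∀ g : G, ∃ k ∈ K, ∃ z ∈ Subgroup.center G, g = k * z := by
      intro g
      have : QuotientGroup.mk' (Subgroup.center G) g ∈ M := by rw [htop]; trivial
      obtain ⟨k, hk, hkg⟩ := this
      refine ⟨k, hk, k⁻¹ * g, ?_, by group⟩
      exact (QuotientGroup.eq (s := Subgroup.center G)).1 hkg
    have hcomm : commutator G ≤ K := by
      rw [commutator_def, Subgroup.commutator_le]
      intro g _ h _
      obtain ⟨k, hk, z, hz, hgz⟩ := hdecomp g
      obtain ⟨k', hk', z', hz', hgz'⟩ := hdecomp h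
      rw [hKdef]
      have hρg : V.ρ g = V.ρ z := by
        rw [hgz, _root_.map_mul, (hKdef k).1 hk, one_mul]
      have hρh : V.ρ h = V.ρ z' := by
        rw [hgz', _root_.map_mul, (hKdef k').1 hk', one_mul]
      have hρgi : V.ρ g⁻¹ = V.ρ z⁻¹ := by
        rw [hgz, mul_inv_rev, _root_.map_mul, (hKdef k⁻¹).1 (K.inv_mem hk), mul_one]
      have hρhi : V.ρ h⁻¹ = V.ρ z'⁻¹ := by
        rw [hgz', mul_inv_rev, _root_.map_mul, (hKdef k'⁻¹).1 (K.inv_mem hk'), mul_one]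
      show V.ρ ⁅g, h⁆ = 1
      rw [commutatorElement_def, _root_.map_mul, _root_.map_mul, _root_.map_mul,
        hρg, hρh, hρgi, hρhi, ← _root_.map_mul, ← _root_.map_mul, ← _root_.map_mul]
      have : z * z' * z⁻¹ * z'⁻¹ = 1 := by
        have hcz := Subgroup.mem_center_iff.1 hz' z⁻¹
        calc z * z' * z⁻¹ * z'⁻¹ = z * (z' * z⁻¹) * z'⁻¹ := by group
          _ = z * (z⁻¹ * z') * z'⁻¹ := by rw [← hcz]
          _ = 1 := by group
      rw [this, _root_.map_one]
    intro g
    rw [← hKdef]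
    have : (⊤ : Subgroup G) ≤ K := hperf ▸ hcomm
    exact this trivial

lemma arith {s d I p k : ℕ} (hp : p.Prime) (hk : 0 < k) (hd : 0 < d) (hsI : s ∣ I)
    (hI : I = d * p ^ k) (hds : d ^ 2 ≤ s)
    (hklst : s < (s / p ^ s.factorization p) ^ 2) : False := by
  have hs0 : s ≠ 0 := by
    intro h
    rw [h] at hds
    have : d = 0 := by nlinarith [hds]
    omega
  set m := s / p ^ s.factorization p with hm
  have hmdvds : m ∣ s := Nat.ordCompl_dvd s p
  have hmcop : m.Coprime (p ^ k) :=
    ((Nat.coprime_ordCompl hp hs0).symm).pow_right k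
  have hmI : m ∣ I := dvd_trans hmdvds hsI
  rw [hI] at hmI
  have hmd : m ∣ d := hmcop.dvd_of_dvd_mul_right hmI
  have hmled : m ≤ d := Nat.le_of_dvd hd hmd
  have : m ^ 2 ≤ d ^ 2 := Nat.pow_le_pow_left hmled 2
  omega

end QSAux

theorem stmt7 {G : Type} [Group G] [Finite G]
    (hperf : commutator G = ⊤)
    (hsimple : IsSimpleGroup (G ⧸ Subgroup.center G))
    (hKLST : ∀ p : ℕ, p.Prime →
      Nat.card (G ⧸ Subgroup.center G) <
        (Nat.card (G ⧸ Subgroup.center G) /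
          p ^ ((Nat.card (G ⧸ Subgroup.center G)).factorization p)) ^ 2) :
    ¬ ∃ V : FDRep ℂ G, Simple V ∧ V.character ≠ 1 ∧ IsPrimePow (codeg V) := by
  rintro ⟨V, hsimp, hchar, hpp⟩
  haveI := hsimp
  letI : Fintype G := Fintype.ofFinite G
  have hn : Module.finrank ℂ ↥V ≠ 0 := QSAux.finrank_ne_zero V
  rcases QSAux.kernel_cases hperf hsimple V (repKer V) (fun g => Iff.rfl) with hKZ | htriv
  · obtain ⟨p, k, hp, hk, hpk⟩ := hpp
    have hpn : p.Prime := Nat.prime_iff.mpr hp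
    have hdvd : degree V ∣ (repKer V).index := QSAux.char_dvd_index V hn
    have hI : (repKer V).index = degree V * p ^ k := by
      have h1 : degree V * ((repKer V).index / degree V) = (repKer V).index :=
        Nat.mul_div_cancel' hdvd
      rw [← h1]
      congr 1
      exact hpk.symm
    have hcardrel : Nat.card ↥(Subgroup.center G) * (Subgroup.center G).index = Nat.card G :=
      Subgroup.card_mul_index _
    have hsq := QSAux.sq_card_center_le V
    have hZpos : 0 < Nat.card ↥(Subgroup.center G) := Nat.card_pos
    have hds : degree V ^ 2 ≤ (Subgroup.center G).index := by
      have h2 : degree V ^ 2 * Nat.card ↥(Subgroup.center G)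
          ≤ (Subgroup.center G).index * Nat.card ↥(Subgroup.center G) := by
        rw [mul_comm ((Subgroup.center G).index) _, hcardrel]
        exact hsq
      exact Nat.le_of_mul_le_mul_right h2 hZpos
    have hsI : (Subgroup.center G).index ∣ (repKer V).index :=
      Subgroup.index_dvd_of_le hKZ
    exact QSAux.arith hpn hk (Nat.pos_of_ne_zero hn) hsI hI hds (hKLST p hpn)
  · exact hchar (QSAux.trivial_char V htriv)
end

section
/- Let G be a finite group with a faithful irreducible character χ of p-power codegree for some prime p. If χ is induced from a Sylow p-subgroup of G and n denotes the product of the orders of the nonabelian composition factors of G, and if n_{p'} > n_p holds, then cod(χ) > n_p. -/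
open FiniteDimensional CategoryTheory

open Classical in
noncomputable def inducedChar {G : Type} [Group G] [Finite G] (P : Subgroup G) (θ : P → ℂ) :
    G → ℂ := fun g =>
  (Nat.card P : ℂ)⁻¹ * ∑ᶠ x : G, if h : x⁻¹ * g * x ∈ P then θ ⟨x⁻¹ * g * x, h⟩ else 0

section AuxLemmas
open Module Polynomial

/-- For a finite group element, the character at the inverse is the conjugate. -/
lemma char_inv_eq_conj {G : Type} [Group G] [Finite G] (V : FDRep ℂ G) (g : G) :
    V.character g⁻¹ = starRingEnd ℂ (V.character g) := by
  classical
  set m := orderOf g with hm_def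
  have hm : m ≠ 0 := (orderOf_pos g).ne'
  set f : Module.End ℂ V := V.ρ g with hf_def
  set f' : Module.End ℂ V := V.ρ g⁻¹ with hf'_def
  have hfm : f ^ m = 1 := by
    rw [hf_def, ← map_pow, hm_def, pow_orderOf_eq_one, map_one]
  have hff' : f' * f = 1 := by
    rw [hf_def, hf'_def, ← map_mul, inv_mul_cancel, map_one]
  have heig : ∀ μ : ℂ, f.eigenspace μ ≠ ⊥ → μ ^ m = 1 := by
    intro μ hμ
    obtain ⟨v, hv⟩ := Module.End.HasEigenvalue.exists_hasEigenvector hμ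
    have h1 : (f ^ m) v = μ ^ m • v := hv.pow_apply m
    rw [hfm] at h1
    have h2 : (μ ^ m - 1) • v = 0 := by
      rw [sub_smul, one_smul, ← h1]; simp
    rcases smul_eq_zero.mp h2 with h | h
    · exact sub_eq_zero.mp h
    · exact absurd h hv.2
  have hss : f.IsSemisimple := by
    apply Module.End.isSemisimple_of_squarefree_aeval_eq_zero
      (p := X ^ m - C (1 : ℂ))
    · exact (Polynomial.separable_X_pow_sub_C (1 : ℂ)
        (by exact_mod_cast Nat.cast_ne_zero.mpr hm) one_ne_zero).squarefree
    · simp [map_sub, aeval_X_pow, hfm]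
  have hsup : ⨆ μ : ℂ, f.eigenspace μ = ⊤ := by
    have h1 := Module.End.iSup_maxGenEigenspace_eq_top f
    have h2 : ∀ μ : ℂ, f.maxGenEigenspace μ = f.eigenspace μ := fun μ =>
      hss.isFinitelySemisimple.maxGenEigenspace_eq_eigenspace μ
    simpa [h2] using h1
  have hInd : iSupIndep f.eigenspace := f.eigenspaces_iSupIndep
  have hfin : {μ : ℂ | f.eigenspace μ ≠ ⊥}.Finite :=
    WellFoundedGT.finite_ne_bot_of_iSupIndep hInd
  have hInt : DirectSum.IsInternal f.eigenspace :=
    DirectSum.isInternal_submodule_of_iSupIndep_of_iSup_eq_top hInd hsup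
  have hmapsf : ∀ μ : ℂ, Set.MapsTo f (f.eigenspace μ) (f.eigenspace μ) := by
    intro μ v hv
    have hv' : v ∈ f.eigenspace μ := hv
    have h1 : f v = μ • v := Module.End.mem_eigenspace_iff.mp hv'
    show f v ∈ f.eigenspace μ
    rw [h1]
    exact Submodule.smul_mem _ _ hv'
  have hmapsf' : ∀ μ : ℂ, Set.MapsTo f' (f.eigenspace μ) (f.eigenspace μ) := by
    intro μ v hv
    have h1 : f v = μ • v := Module.End.mem_eigenspace_iff.mp hv
    by_cases hμ : f.eigenspace μ = ⊥
    · have hv0 : v = 0 := by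
        have : v ∈ (⊥ : Submodule ℂ V) := by rw [← hμ]; exact hv
        simpa using this
      show f' v ∈ f.eigenspace μ
      rw [hv0, map_zero]
      exact Submodule.zero_mem _
    · have hμ0 : μ ≠ 0 := by
        intro h0
        have := heig μ hμ
        rw [h0, zero_pow hm] at this
        exact zero_ne_one this
      have h2 : f' (f v) = v := by
        calc f' (f v) = (f' * f) v := rfl
        _ = v := by rw [hff']; rfl
      have h3 : f' v = μ⁻¹ • v := by
        rw [h1, map_smul] at h2
        calc f' v = μ⁻¹ • (μ • f' v) := by rw [smul_smul, inv_mul_cancel₀ hμ0, one_smul]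
        _ = μ⁻¹ • v := by rw [h2]
      show f' v ∈ f.eigenspace μ
      rw [h3]
      exact Submodule.smul_mem _ _ hv
  -- now expand traces
  show LinearMap.trace ℂ V (f') = starRingEnd ℂ (LinearMap.trace ℂ V f)
  rw [LinearMap.trace_eq_sum_trace_restrict' hInt hfin hmapsf',
    LinearMap.trace_eq_sum_trace_restrict' hInt hfin hmapsf, map_sum]
  apply Finset.sum_congr rfl
  intro μ hμ
  have hμb : f.eigenspace μ ≠ ⊥ := by simpa using (Set.Finite.mem_toFinset hfin).mp hμ
  have hμ1 : μ ^ m = 1 := heig μ hμb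
  have hμ0 : μ ≠ 0 := by
    intro h0; rw [h0, zero_pow hm] at hμ1; exact zero_ne_one hμ1
  have hresf : f.restrict (hmapsf μ) = μ • LinearMap.id := by
    ext ⟨v, hv⟩
    simp only [LinearMap.restrict_apply, LinearMap.smul_apply, LinearMap.id_apply,
      SetLike.val_smul]
    exact Module.End.mem_eigenspace_iff.mp hv
  have hresf' : f'.restrict (hmapsf' μ) = μ⁻¹ • LinearMap.id := by
    ext ⟨v, hv⟩
    have h1 : f v = μ • v := Module.End.mem_eigenspace_iff.mp hv
    have h2 : f' (f v) = v := by
      calc f' (f v) = (f' * f) v := rfl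
      _ = v := by rw [hff']; rfl
    rw [h1, map_smul] at h2
    have h3 : f' v = μ⁻¹ • v := by
      calc f' v = μ⁻¹ • (μ • f' v) := by rw [smul_smul, inv_mul_cancel₀ hμ0, one_smul]
      _ = μ⁻¹ • v := by rw [h2]
    simp only [LinearMap.restrict_apply, LinearMap.smul_apply, LinearMap.id_apply,
      SetLike.val_smul]
    exact h3
  have hconj : starRingEnd ℂ μ = μ⁻¹ :=
    (Complex.inv_eq_conj (Complex.norm_eq_one_of_pow_eq_one hμ1 hm)).symm
  rw [hresf, hresf', LinearMap.map_smul, LinearMap.map_smul, LinearMap.trace_id,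
    smul_eq_mul, smul_eq_mul, map_mul, hconj, map_natCast]

open CategoryTheory in
lemma sq_finrank_le_card {G : Type} [Group G] [Finite G] (V : FDRep ℂ G) [Simple V] :
    Module.finrank ℂ V * Module.finrank ℂ V ≤ Nat.card G := by
  classical
  letI instF : Fintype G := Fintype.ofFinite G
  have hcard0 : ((Fintype.card G) : ℂ) ≠ 0 :=
    Nat.cast_ne_zero.mpr Fintype.card_ne_zero
  letI : Invertible ((Nat.card G) : ℂ) :=
    invertibleOfNonzero (by rw [Nat.card_eq_fintype_card]; exact hcard0)
  have h := FDRep.char_orthonormal (k := ℂ) (G := G) V V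
  rw [if_pos ⟨Iso.refl V⟩] at h
  have h2 : ∑ g : G, V.character g * V.character g⁻¹
      = ((Fintype.card G) : ℂ) := by
    rw [Nat.card_eq_fintype_card, inv_mul_eq_one₀ hcard0] at h
    simpa using h.symm
  have h3 : ∑ g : G, (Complex.normSq (V.character g) : ℂ)
      = ((Fintype.card G) : ℂ) := by
    rw [← h2]
    apply Finset.sum_congr rfl
    intro g _
    rw [show (V.character g⁻¹) = starRingEnd ℂ (V.character g) from char_inv_eq_conj V g,
      Complex.mul_conj]
  have h4 : ∑ g : G, Complex.normSq (V.character g)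
      = ((Fintype.card G) : ℝ) := by
    have := congrArg Complex.re h3
    simpa using this
  have h5 : Complex.normSq (V.character 1) ≤ ((Fintype.card G) : ℝ) := by
    rw [← h4]
    exact Finset.single_le_sum (fun g _ => Complex.normSq_nonneg _) (Finset.mem_univ (α := G) 1)
  rw [FDRep.char_one] at h5
  have h6 : ((Module.finrank ℂ V : ℝ)) * (Module.finrank ℂ V : ℝ)
      ≤ ((Fintype.card G) : ℝ) := by
    simpa [Complex.normSq_apply] using h5
  have h7 : Nat.card G = Fintype.card G := @Nat.card_eq_fintype_card G instF
  rw [h7]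
  exact_mod_cast h6

end AuxLemmas

theorem stmt19 {G : Type} [Group G] [Finite G] {p : ℕ} [Fact p.Prime]
    (V : FDRep ℂ G) [Simple V] (hfaith : repKer V = ⊥)
    (hpow : ∃ a : ℕ, codeg V = p ^ a)
    -- χ is induced from an irreducible character of a Sylow p-subgroup of G
    (P : Sylow p G) (W : FDRep ℂ ↥(P : Subgroup G)) (hW : Simple W)
    (hind : V.character = inducedChar (P : Subgroup G) W.character)
    -- a composition series ⊥ = c 0 < c 1 < ... < c k = ⊤ of G
    (k : ℕ) (c : ℕ → Subgroup G) (h0 : c 0 = ⊥) (hk : c k = ⊤)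
    (hlt : ∀ i < k, c i < c (i + 1))
    (hnorm : ∀ i < k, ((c i).subgroupOf (c (i + 1))).Normal)
    (hmax : ∀ i < k, ∀ d : Subgroup G, c i ≤ d → d ≤ c (i + 1) →
      (d.subgroupOf (c (i + 1))).Normal → d = c i ∨ d = c (i + 1))
    -- f i is the order of the i-th composition factor if it is nonabelian, and 1 otherwise
    (f : ℕ → ℕ)
    (hfab : ∀ i < k, (∀ x ∈ c (i + 1), ∀ y ∈ c (i + 1), x * y * x⁻¹ * y⁻¹ ∈ c i) → f i = 1)
    (hfna : ∀ i < k, ¬ (∀ x ∈ c (i + 1), ∀ y ∈ c (i + 1), x * y * x⁻¹ * y⁻¹ ∈ c i) →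
      f i = (c i).relIndex (c (i + 1)))
    -- n is the product of the orders of the nonabelian composition factors of G
    (n : ℕ) (hn : n = ∏ i ∈ Finset.range k, f i)
    (hineq : p ^ (n.factorization p) < n / p ^ (n.factorization p)) :
    p ^ (n.factorization p) < codeg V := by
  classical
  letI : Fintype G := Fintype.ofFinite G
  set d := degree V with hd_def
  set dW := degree W with hdW_def
  -- d is positive
  have hdpos : 0 < d := by
    rw [Nat.pos_iff_ne_zero]
    intro h0
    have hsub : Subsingleton V := Module.finrank_zero_iff (R := ℂ) (M := V) |>.mp h0
    have hsub2 : Subsingleton (V ⟶ V) := by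
      constructor
      intro a b
      apply Action.Hom.ext
      apply FGModuleCat.hom_ext
      apply LinearMap.ext
      intro v
      exact hsub.allEq _ _
    have h1 : Module.finrank ℂ (V ⟶ V) = 1 := by
      rw [FDRep.finrank_hom_simple_simple V V, if_pos ⟨Iso.refl V⟩]
    rw [Module.finrank_zero_of_subsingleton] at h1
    exact absurd h1 (by norm_num)
  -- evaluate the induced-character identity at 1
  have hone := congrFun hind 1
  rw [FDRep.char_one] at hone
  unfold inducedChar at hone
  rw [finsum_eq_sum_of_fintype] at hone
  have hsummand : ∀ x : G,
      (if h : x⁻¹ * 1 * x ∈ (P : Subgroup G) then W.character ⟨x⁻¹ * 1 * x, h⟩ else 0)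
        = (dW : ℂ) := by
    intro x
    have hx : x⁻¹ * 1 * x = 1 := by group
    simp only [hx]
    rw [dif_pos (one_mem _)]
    have h1 : (⟨1, one_mem _⟩ : ↥(P : Subgroup G)) = 1 := rfl
    rw [h1, FDRep.char_one]
    rfl
  rw [Finset.sum_congr rfl (fun x _ => hsummand x), Finset.sum_const] at hone
  have hPfin : Finite ↥(P : Subgroup G) := inferInstance
  have hPpos : 0 < Nat.card ↥(P : Subgroup G) := Nat.card_pos
  have hGpos : 0 < Nat.card G := Nat.card_pos
  -- turn the complex identity into a natural-number identity
  have hnat : d * Nat.card ↥(P : Subgroup G) = Nat.card G * dW := by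
    have hPne : ((Nat.card ↥(P : Subgroup G)) : ℂ) ≠ 0 :=
      Nat.cast_ne_zero.mpr hPpos.ne'
    rw [Finset.card_univ] at hone
    have h2 : (d : ℂ) = ((Nat.card ↥(P : Subgroup G) : ℂ))⁻¹ * (Fintype.card G • (dW : ℂ)) :=
      hone
    have h3 : (d : ℂ) * (Nat.card ↥(P : Subgroup G) : ℂ) = (Nat.card G : ℂ) * (dW : ℂ) := by
      rw [h2, nsmul_eq_mul, Nat.card_eq_fintype_card]
      field_simp
      rw [Nat.card_eq_fintype_card (α := G)]; ring
    exact_mod_cast h3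
  -- the codegree equals |G| / d
  have hcod : codeg V = Nat.card G / d := by
    unfold codeg
    rw [hfaith, Subgroup.index_bot]
  -- d² ≤ |G|
  have hsq : d * d ≤ Nat.card G := sq_finrank_le_card V
  -- n divides |G|
  have hmono : ∀ j, j ≤ k → ∀ i, i ≤ j → c i ≤ c j := by
    intro j
    induction j with
    | zero => intro _ i hi; cases Nat.le_zero.mp hi; exact le_refl _
    | succ j ih =>
      intro hjk i hi
      rcases Nat.le_succ_iff.mp hi with h | h
      · exact le_trans (ih (le_trans (Nat.le_succ j) hjk) i h)
          (le_of_lt (hlt j (Nat.lt_of_lt_of_le (Nat.lt_succ_self j) hjk)))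
      · rw [h]
  have hprod : ∀ j, j ≤ k →
      (∏ i ∈ Finset.range j, (c i).relIndex (c (i + 1))) = (c 0).relIndex (c j) := by
    intro j
    induction j with
    | zero => intro _; simp
    | succ j ih =>
      intro hjk
      have hjk' : j ≤ k := le_trans (Nat.le_succ j) hjk
      have hjlt : j < k := Nat.lt_of_lt_of_le (Nat.lt_succ_self j) hjk
      rw [Finset.prod_range_succ, ih hjk',
        Subgroup.relIndex_mul_relIndex _ _ _ (hmono j hjk' 0 (Nat.zero_le j))
          (le_of_lt (hlt j hjlt))]
  have hfd : ∀ i ∈ Finset.range k, f i ∣ (c i).relIndex (c (i + 1)) := by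
    intro i hi
    rw [Finset.mem_range] at hi
    by_cases hab : ∀ x ∈ c (i + 1), ∀ y ∈ c (i + 1), x * y * x⁻¹ * y⁻¹ ∈ c i
    · rw [hfab i hi hab]; exact one_dvd _
    · rw [hfna i hi hab]
  have hproddvd : n ∣ Nat.card G := by
    rw [hn]
    have hdvd := Finset.prod_dvd_prod_of_dvd f (fun i => (c i).relIndex (c (i + 1))) hfd
    rwa [hprod k le_rfl, h0, hk, Subgroup.relIndex_top_right, Subgroup.index_bot] at hdvd
  -- Sylow facts
  have hsyl : Nat.card ↥(P : Subgroup G) = p ^ (Nat.card G).factorization p :=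
    Sylow.card_eq_multiplicity P
  -- d = ordCompl[p] |G| * dW
  have hdW : d = ordCompl[p] (Nat.card G) * dW := by
    have h3 : Nat.card ↥(P : Subgroup G) * (ordCompl[p] (Nat.card G) * dW)
        = Nat.card ↥(P : Subgroup G) * d := by
      conv_lhs => rw [← mul_assoc, hsyl, Nat.ordProj_mul_ordCompl_eq_self]
      rw [← hnat]
      ring
    exact (Nat.eq_of_mul_eq_mul_left hPpos h3).symm
  have hdWpos : 0 < dW := by
    rcases Nat.eq_zero_or_pos dW with h | h
    · rw [h, mul_zero] at hdW; exact absurd hdW hdpos.ne'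
    · exact h
  -- final chain
  calc p ^ n.factorization p < n / p ^ n.factorization p := hineq
    _ ≤ ordCompl[p] (Nat.card G) :=
        Nat.le_of_dvd (Nat.ordCompl_pos p hGpos.ne')
          (Nat.ordCompl_dvd_ordCompl_of_dvd hproddvd p)
    _ ≤ d := by rw [hdW]; exact Nat.le_mul_of_pos_right _ hdWpos
    _ ≤ Nat.card G / d := (Nat.le_div_iff_mul_le hdpos).mpr hsq
    _ = codeg V := hcod.symm
end
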